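/- Let T = Trian(A, M, B) be a triangular algebra over R in which A and B have only trivial idempotents, and let σ be an automorphism of T given in standard form with data (f, g, m₀, ν). Then every σ-centralizing R-linear map Θ of T can be written as Θ(a, m, b) = (δ₁(a) + δ₂(m) + δ₃(b), −m₀·(μ₁(a) + μ₂(m) + μ₃(b)) + δ₁(1_A)·m − ν(m)·μ₁(1_A), μ₁(a) + μ₂(m) + μ₃(b)), where δ₁ : A → A, δ₂ : M → Z_f(A), δ₃ : B → A, μ₁ : A → B, μ₂ : M → Z_g(B), μ₃ : B → B are R-linear maps satisfying, for all a ∈ A, m ∈ M, b ∈ B: (i) f(a)δ₁(a) = δ₁(a)a; (ii) g(b)μ₃(b) = μ₃(b)b; (iii) δ₁(a)·m − ν(m)·μ₁(a) = f(a)·(δ₁(1_A)·m − ν(m)·μ₁(1_A)); (iv) ν(m)·μ₃(b) − δ₃(b)·m = (ν(m)·μ₃(1_B) − δ₃(1_B)·m)·b; (v) δ₂(m)·m = ν(m)·μ₂(m); (vi) δ₁(1_A)·m − ν(m)·μ₁(1_A) = ν(m)·μ₃(1_B) − δ₃(1_B)·m; (vii) f(a)δ₃(b) − δ₃(b)a ∈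 Z(A); (viii) g(b)μ₁(a) − μ₁(a)b ∈ Z(B). -/

import Mathlib

/-!
Triangular algebras `Trian(A, M, B)` realized on the type `A × M × B`, where `A`, `B` are
unital associative `R`-algebras and `M` is an `(A, B)`-bimodule (a left `A`-module and a
right `B`-module, the right action being encoded as a left `Bᵐᵒᵖ`-action, written
`op b • m`, with the two actions commuting), compatible with the `R`-module structure.
-/

set_option linter.unusedSectionVars false

open MulOpposite

variable {R A B M : Type*} [CommRing R] [Ring A] [Ring B]
  [Algebra R A] [Algebra R B]
  [AddCommGroup M] [Module R M]
  [Module A M] [Module Bᵐᵒᵖ M]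
  [SMulCommClass A Bᵐᵒᵖ M]
  [IsScalarTower R A M] [SMulCommClass R A M]
  [IsScalarTower R Bᵐᵒᵖ M] [SMulCommClass R Bᵐᵒᵖ M]

/-- Multiplication of the triangular algebra `Trian(A, M, B)`:
`(a, m, b) * (a', m', b') = (a * a', a • m' + m • b', b * b')`, where the right action of
`B` on `M` is written `op b • m`. -/
instance triMul : Mul (A × M × B) :=
  ⟨fun x y => (x.1 * y.1, x.1 • y.2.1 + op y.2.2 • x.2.1, x.2.2 * y.2.2)⟩

theorem tri_mul_def (x y : A × M × B) :
    x * y = (x.1 * y.1, x.1 • y.2.1 + op y.2.2 • x.2.1, x.2.2 * y.2.2) := rfl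

instance triOne : One (A × M × B) := ⟨(1, 0, 1)⟩

theorem tri_one_def : (1 : A × M × B) = (1, 0, 1) := rfl

/-- The triangular algebra `Trian(A, M, B)` as a ring structure on `A × M × B`. -/
instance triRing : Ring (A × M × B) where
  __ := (inferInstance : AddCommGroup (A × M × B))
  __ := triMul
  __ := triOne
  left_distrib x y z := by
    refine Prod.ext ?_ (Prod.ext ?_ ?_) <;>
      simp [tri_mul_def, mul_add, smul_add, add_smul, Prod.fst_add, Prod.snd_add] <;> abel
  right_distrib x y z := by
    refine Prod.ext ?_ (Prod.ext ?_ ?_) <;>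
      simp [tri_mul_def, add_mul, smul_add, add_smul, Prod.fst_add, Prod.snd_add] <;> abel
  zero_mul x := by
    refine Prod.ext ?_ (Prod.ext ?_ ?_) <;> simp [tri_mul_def]
  mul_zero x := by
    refine Prod.ext ?_ (Prod.ext ?_ ?_) <;> simp [tri_mul_def]
  mul_assoc x y z := by
    refine Prod.ext (mul_assoc _ _ _) (Prod.ext ?_ (mul_assoc _ _ _))
    show (x.1 * y.1) • z.2.1 + op z.2.2 • (x.1 • y.2.1 + op y.2.2 • x.2.1)
        = x.1 • (y.1 • z.2.1 + op z.2.2 • y.2.1) + op (y.2.2 * z.2.2) • x.2.1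
    rw [mul_smul, smul_add, smul_add, op_mul, mul_smul, smul_comm x.1 (op z.2.2)]
    abel
  one_mul x := by
    refine Prod.ext (one_mul _) (Prod.ext ?_ (one_mul _))
    show (1 : A) • x.2.1 + op x.2.2 • (0 : M) = x.2.1
    simp
  mul_one x := by
    refine Prod.ext (mul_one _) (Prod.ext ?_ (mul_one _))
    show x.1 • (0 : M) + op (1 : B) • x.2.1 = x.2.1
    simp

/-- The triangular algebra `Trian(A, M, B)` as an `R`-algebra. -/
instance triAlgebra : Algebra R (A × M × B) :=
  Algebra.ofModule
    (fun r x y => by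
      refine Prod.ext ?_ (Prod.ext ?_ ?_)
      · exact smul_mul_assoc r x.1 y.1
      · show (r • x.1) • y.2.1 + op y.2.2 • (r • x.2.1) = r • (x.1 • y.2.1 + op y.2.2 • x.2.1)
        rw [smul_assoc, smul_add, smul_comm (op y.2.2) r]
      · exact smul_mul_assoc r x.2.2 y.2.2)
    (fun r x y => by
      refine Prod.ext ?_ (Prod.ext ?_ ?_)
      · exact mul_smul_comm r x.1 y.1
      · show x.1 • (r • y.2.1) + op (r • y.2.2) • x.2.1 = r • (x.1 • y.2.1 + op y.2.2 • x.2.1)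
        rw [op_smul, smul_assoc, smul_add, smul_comm x.1 r]
      · exact mul_smul_comm r x.2.2 y.2.2)

theorem tri_center_spec (Φ : A × M × B) (h : ∀ y, Φ * y = y * Φ) :
    Φ.2.1 = 0 ∧ (∀ a : A, Φ.1 * a = a * Φ.1) ∧ (∀ b : B, Φ.2.2 * b = b * Φ.2.2) ∧
    (∀ m : M, Φ.1 • m = op Φ.2.2 • m) := by
  have hmid : Φ.2.1 = 0 := by
    have := congrArg (fun z : A × M × B => z.2.1) (h (1, 0, 0))
    simpa [tri_mul_def] using this.symm
  refine ⟨hmid, fun a => ?_, fun b => ?_, fun m => ?_⟩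
  · have := congrArg (fun z : A × M × B => z.1) (h (a, 0, 0))
    simpa [tri_mul_def] using this
  · have := congrArg (fun z : A × M × B => z.2.2) (h (0, 0, b))
    simpa [tri_mul_def] using this
  · have := congrArg (fun z : A × M × B => z.2.1) (h (0, m, 0))
    simpa [tri_mul_def, hmid] using this

set_option maxHeartbeats 1600000 in
/-- Description of σ-centralizing linear maps of a triangular algebra
whose corner algebras have only trivial idempotents, where σ is an automorphism in
standard form with data (f, g, m₀, ν). -/
theorem sigma_centralizing_map_description
    [Nontrivial M] [FaithfulSMul A M] [FaithfulSMul Bᵐᵒᵖ M]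
    (hA : ∀ e : A, e * e = e → e = 0 ∨ e = 1)
    (hB : ∀ e : B, e * e = e → e = 0 ∨ e = 1)
    (f : A ≃ₐ[R] A) (g : B ≃ₐ[R] B) (m₀ : M) (ν : M ≃ₗ[R] M)
    (hν₁ : ∀ (a : A) (m : M), ν (a • m) = f a • ν m)
    (hν₂ : ∀ (m : M) (b : B), ν (op b • m) = op (g b) • ν m)
    (σ : (A × M × B) ≃ₐ[R] (A × M × B))
    (hσ : ∀ (a : A) (m : M) (b : B),
      σ (a, m, b) = (f a, f a • m₀ - op (g b) • m₀ + ν m, g b))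
    (Θ : (A × M × B) →ₗ[R] (A × M × B))
    (hΘ : ∀ x y : A × M × B, (σ x * Θ x - Θ x * x) * y = y * (σ x * Θ x - Θ x * x)) :
    ∃ (δ₁ : A →ₗ[R] A) (δ₂ : M →ₗ[R] A) (δ₃ : B →ₗ[R] A)
      (μ₁ : A →ₗ[R] B) (μ₂ : M →ₗ[R] B) (μ₃ : B →ₗ[R] B),
      -- δ₂ maps into the f-center of A and μ₂ maps into the g-center of B
      (∀ (m : M) (x : A), f x * δ₂ m = δ₂ m * x) ∧
      (∀ (m : M) (x : B), g x * μ₂ m = μ₂ m * x) ∧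
      -- the form of Θ
      (∀ (a : A) (m : M) (b : B),
        Θ (a, m, b) = (δ₁ a + δ₂ m + δ₃ b,
          -(op (μ₁ a + μ₂ m + μ₃ b) • m₀) + δ₁ 1 • m - op (μ₁ 1) • ν m,
          μ₁ a + μ₂ m + μ₃ b)) ∧
      -- (i)
      (∀ a : A, f a * δ₁ a = δ₁ a * a) ∧
      -- (ii)
      (∀ b : B, g b * μ₃ b = μ₃ b * b) ∧
      -- (iii)
      (∀ (a : A) (m : M),
        δ₁ a • m - op (μ₁ a) • ν m = f a • (δ₁ 1 • m - op (μ₁ 1) • ν m)) ∧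
      -- (iv)
      (∀ (m : M) (b : B),
        op (μ₃ b) • ν m - δ₃ b • m = op b • (op (μ₃ 1) • ν m - δ₃ 1 • m)) ∧
      -- (v)
      (∀ m : M, δ₂ m • m = op (μ₂ m) • ν m) ∧
      -- (vi)
      (∀ m : M, δ₁ 1 • m - op (μ₁ 1) • ν m = op (μ₃ 1) • ν m - δ₃ 1 • m) ∧
      -- (vii)
      (∀ (a : A) (b : B) (x : A),
        (f a * δ₃ b - δ₃ b * a) * x = x * (f a * δ₃ b - δ₃ b * a)) ∧
      -- (viii)
      (∀ (a : A) (b : B) (x : B),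
        (g b * μ₁ a - μ₁ a * b) * x = x * (g b * μ₁ a - μ₁ a * b)) := by
  have fA0 : ∀ a : A, (∀ m : M, a • m = 0) → a = 0 := fun a h =>
    eq_of_smul_eq_smul (α := M) (fun m => by rw [h m, zero_smul])
  have fB0 : ∀ b : B, (∀ m : M, op b • m = 0) → b = 0 := fun b h => by
    have : op b = (0 : Bᵐᵒᵖ) :=
      eq_of_smul_eq_smul (α := M) (fun m => by rw [h m, zero_smul])
    simpa using congrArg unop this
  have key := fun x : A × M × B => tri_center_spec (σ x * Θ x - Θ x * x) (hΘ x)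
  -- zero element
  have h0 : Θ ((0 : A), (0 : M), (0 : B)) = 0 := map_zero Θ
  have h0A : (Θ ((0 : A), (0 : M), (0 : B))).1 = 0 := by rw [h0]; rfl
  have h0M : (Θ ((0 : A), (0 : M), (0 : B))).2.1 = 0 := by rw [h0]; rfl
  have h0B : (Θ ((0 : A), (0 : M), (0 : B))).2.2 = 0 := by rw [h0]; rfl
  -- decomposition
  have ΘD : ∀ (a : A) (m : M) (b : B),
      Θ (a, m, b) = Θ (a, 0, 0) + Θ (0, m, 0) + Θ (0, 0, b) := by
    intro a m b
    have e : ((a, m, b) : A × M × B) = (a, 0, 0) + (0, m, 0) + (0, 0, b) := by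
      refine Prod.ext ?_ (Prod.ext ?_ ?_) <;> simp
    rw [e, map_add, map_add]
  have hp : ∀ (a : A) (m : M) (b : B),
      (Θ (a, m, b)).1 = (Θ (a, 0, 0)).1 + (Θ (0, m, 0)).1 + (Θ (0, 0, b)).1 := by
    intro a m b; rw [ΘD]; rfl
  have hq : ∀ (a : A) (m : M) (b : B),
      (Θ (a, m, b)).2.1 = (Θ (a, 0, 0)).2.1 + (Θ (0, m, 0)).2.1 + (Θ (0, 0, b)).2.1 := by
    intro a m b; rw [ΘD]; rfl
  have hr : ∀ (a : A) (m : M) (b : B),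
      (Θ (a, m, b)).2.2 = (Θ (a, 0, 0)).2.2 + (Θ (0, m, 0)).2.2 + (Θ (0, 0, b)).2.2 := by
    intro a m b; rw [ΘD]; rfl
  have addA : ∀ a a' : A, Θ (a + a', 0, 0) = Θ (a, 0, 0) + Θ (a', 0, 0) := by
    intro a a'
    have e : ((a + a', 0, 0) : A × M × B) = (a, 0, 0) + (a', 0, 0) := by
      refine Prod.ext ?_ (Prod.ext ?_ ?_) <;> simp
    rw [e, map_add]
  have addB : ∀ b b' : B, Θ (0, 0, b + b') = Θ (0, 0, b) + Θ (0, 0, b') := by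
    intro b b'
    have e : ((0, 0, b + b') : A × M × B) = (0, 0, b) + (0, 0, b') := by
      refine Prod.ext ?_ (Prod.ext ?_ ?_) <;> simp
    rw [e, map_add]
  -- the main middle-component equation
  have K0 : ∀ (a : A) (m : M) (b : B),
      f a • (Θ (a, m, b)).2.1 + op ((Θ (a, m, b)).2.2) • (f a • m₀ - op (g b) • m₀ + ν m)
        = (Θ (a, m, b)).1 • m + op b • (Θ (a, m, b)).2.1 := by
    intro a m b
    have h := (key (a, m, b)).1
    have h2 : (σ (a, m, b) * Θ (a, m, b) - Θ (a, m, b) * (a, m, b)).2.1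
        = (f a • (Θ (a, m, b)).2.1
            + op ((Θ (a, m, b)).2.2) • (f a • m₀ - op (g b) • m₀ + ν m))
          - ((Θ (a, m, b)).1 • m + op b • (Θ (a, m, b)).2.1) := by
      rw [hσ]; rfl
    rw [h2] at h
    exact sub_eq_zero.mp h
  have K13 : ∀ (a : A) (m : M) (b : B) (m' : M),
      (f a * (Θ (a, m, b)).1 - (Θ (a, m, b)).1 * a) • m'
        = op (g b * (Θ (a, m, b)).2.2 - (Θ (a, m, b)).2.2 * b) • m' := by
    intro a m b m'
    have h := (key (a, m, b)).2.2.2 m'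
    have e1 : (σ (a, m, b) * Θ (a, m, b) - Θ (a, m, b) * (a, m, b)).1
        = f a * (Θ (a, m, b)).1 - (Θ (a, m, b)).1 * a := by rw [hσ]; rfl
    have e3 : (σ (a, m, b) * Θ (a, m, b) - Θ (a, m, b) * (a, m, b)).2.2
        = g b * (Θ (a, m, b)).2.2 - (Θ (a, m, b)).2.2 * b := by rw [hσ]; rfl
    rwa [e1, e3] at h
  have K1 : ∀ (a : A) (m : M) (b : B) (x : A),
      (f a * (Θ (a, m, b)).1 - (Θ (a, m, b)).1 * a) * x
        = x * (f a * (Θ (a, m, b)).1 - (Θ (a, m, b)).1 * a) := by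
    intro a m b x
    have h := (key (a, m, b)).2.1 x
    have e1 : (σ (a, m, b) * Θ (a, m, b) - Θ (a, m, b) * (a, m, b)).1
        = f a * (Θ (a, m, b)).1 - (Θ (a, m, b)).1 * a := by rw [hσ]; rfl
    rwa [e1] at h
  have K3 : ∀ (a : A) (m : M) (b : B) (x : B),
      (g b * (Θ (a, m, b)).2.2 - (Θ (a, m, b)).2.2 * b) * x
        = x * (g b * (Θ (a, m, b)).2.2 - (Θ (a, m, b)).2.2 * b) := by
    intro a m b x
    have h := (key (a, m, b)).2.2.1 x
    have e3 : (σ (a, m, b) * Θ (a, m, b) - Θ (a, m, b) * (a, m, b)).2.2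
        = g b * (Θ (a, m, b)).2.2 - (Θ (a, m, b)).2.2 * b := by rw [hσ]; rfl
    rwa [e3] at h
  -- pure substitutions
  have S1 : ∀ a : A,
      f a • (Θ (a, 0, 0)).2.1 + op ((Θ (a, 0, 0)).2.2) • (f a • m₀) = 0 := by
    intro a
    have h := K0 a 0 0
    simpa using h
  have S2 : ∀ b : B,
      op b • (Θ (0, 0, b)).2.1 = -(op ((Θ (0, 0, b)).2.2) • (op (g b) • m₀)) := by
    intro b
    have h := K0 0 0 b
    simp only [map_zero, zero_smul, zero_sub, map_zero ν, add_zero, smul_neg,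
      Prod.fst_zero, zero_add, smul_zero] at h
    exact h.symm
  have S3 : ∀ m : M, op ((Θ (0, m, 0)).2.2) • ν m = (Θ (0, m, 0)).1 • m := by
    intro m
    have h := K0 0 m 0
    simpa using h
  -- (i) and (ii)
  have hi : ∀ a : A, f a * (Θ (a, 0, 0)).1 = (Θ (a, 0, 0)).1 * a := by
    intro a
    have h : ∀ m' : M, (f a * (Θ (a, 0, 0)).1 - (Θ (a, 0, 0)).1 * a) • m' = 0 := by
      intro m'
      have := K13 a 0 0 m'
      simpa using this
    have hz : f a * (Θ (a, 0, 0)).1 - (Θ (a, 0, 0)).1 * a = 0 := by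
      refine eq_of_smul_eq_smul (α := M) (fun m' => ?_)
      rw [h m', zero_smul]
    exact sub_eq_zero.mp hz
  have hii : ∀ b : B, g b * (Θ (0, 0, b)).2.2 = (Θ (0, 0, b)).2.2 * b := by
    intro b
    have h : ∀ m' : M, op (g b * (Θ (0, 0, b)).2.2 - (Θ (0, 0, b)).2.2 * b) • m' = 0 := by
      intro m'
      have := K13 0 0 b m'
      simpa using this.symm
    exact sub_eq_zero.mp (fB0 _ h)
  -- δ₂ into the f-center
  have hδ₂Z : ∀ (m : M) (a : A), f a * (Θ (0, m, 0)).1 = (Θ (0, m, 0)).1 * a := by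
    intro m a
    have hdec : (Θ (a, m, 0)).1 = (Θ (a, 0, 0)).1 + (Θ (0, m, 0)).1 := by
      rw [hp a m 0, h0A, add_zero]
    have h : ∀ m' : M, (f a * (Θ (0, m, 0)).1 - (Θ (0, m, 0)).1 * a) • m' = 0 := by
      intro m'
      have h := K13 a m 0 m'
      rw [hdec, mul_add, add_mul, hi a] at h
      simpa [add_sub_add_left_eq_sub] using h
    have hz : f a * (Θ (0, m, 0)).1 - (Θ (0, m, 0)).1 * a = 0 := by
      refine eq_of_smul_eq_smul (α := M) (fun m' => ?_)
      rw [h m', zero_smul]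
    exact sub_eq_zero.mp hz
  -- μ₂ into the g-center
  have hμ₂Z : ∀ (m : M) (b : B), g b * (Θ (0, m, 0)).2.2 = (Θ (0, m, 0)).2.2 * b := by
    intro m b
    have hdec : (Θ (0, m, b)).2.2 = (Θ (0, m, 0)).2.2 + (Θ (0, 0, b)).2.2 := by
      rw [hr 0 m b, h0B, zero_add]
    have h : ∀ m' : M, op (g b * (Θ (0, m, 0)).2.2 - (Θ (0, m, 0)).2.2 * b) • m' = 0 := by
      intro m'
      have h := K13 0 m b m'
      rw [hdec, mul_add, add_mul] at h
      have e : g b * (Θ (0, m, 0)).2.2 + g b * (Θ (0, 0, b)).2.2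
            - ((Θ (0, m, 0)).2.2 * b + (Θ (0, 0, b)).2.2 * b)
          = g b * (Θ (0, m, 0)).2.2 - (Θ (0, m, 0)).2.2 * b := by
        rw [hii b]; abel
      rw [e] at h
      simpa using h.symm
    exact sub_eq_zero.mp (fB0 _ h)
  -- q on A: q₁ a = -(op (μ₁ a) • m₀)
  have hS11 : (Θ ((1 : A), 0, 0)).2.1 + op ((Θ ((1 : A), 0, 0)).2.2) • m₀ = 0 := by
    simpa using S1 1
  have hq1one : (Θ ((1 : A), 0, 0)).2.1 = -(op ((Θ ((1 : A), 0, 0)).2.2) • m₀) :=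
    eq_neg_of_add_eq_zero_left hS11
  have hq1 : ∀ a : A, (Θ (a, 0, 0)).2.1 = -(op ((Θ (a, 0, 0)).2.2) • m₀) := by
    intro a
    have hcross : f a • (Θ ((1 : A), 0, 0)).2.1
        + op ((Θ ((1 : A), 0, 0)).2.2) • (f a • m₀) = 0 := by
      rw [hq1one, smul_neg, smul_comm (f a) (op ((Θ ((1 : A), 0, 0)).2.2)) m₀,
        neg_add_cancel]
    refine eq_neg_of_add_eq_zero_left ?_
    have ID : (Θ (a, 0, 0)).2.1 + op ((Θ (a, 0, 0)).2.2) • m₀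
        = (f (a + 1) • (Θ (a + 1, 0, 0)).2.1
            + op ((Θ (a + 1, 0, 0)).2.2) • (f (a + 1) • m₀))
          - (f a • (Θ (a, 0, 0)).2.1 + op ((Θ (a, 0, 0)).2.2) • (f a • m₀))
          - ((Θ ((1 : A), 0, 0)).2.1 + op ((Θ ((1 : A), 0, 0)).2.2) • m₀)
          - (f a • (Θ ((1 : A), 0, 0)).2.1 + op ((Θ ((1 : A), 0, 0)).2.2) • (f a • m₀)) := by
      simp only [addA a 1, map_add, map_one, Prod.fst_add, Prod.snd_add, op_add, add_smul,
        smul_add, one_smul]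
      abel
    rw [ID, S1 (a + 1), S1 a, hS11, hcross]
    simp
  -- g-semicentrality of μ₃ 1
  have hgb : ∀ b : B, g b * (Θ (0, 0, (1 : B))).2.2 = (Θ (0, 0, (1 : B))).2.2 * b := by
    intro b
    refine sub_eq_zero.mp ?_
    have ID : g b * (Θ (0, 0, (1 : B))).2.2 - (Θ (0, 0, (1 : B))).2.2 * b
        = (g (b + 1) * (Θ (0, 0, b + 1)).2.2 - (Θ (0, 0, b + 1)).2.2 * (b + 1))
          - (g b * (Θ (0, 0, b)).2.2 - (Θ (0, 0, b)).2.2 * b) := by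
      simp only [addB b 1, map_add, map_one, Prod.fst_add, Prod.snd_add, mul_add, add_mul,
        one_mul, mul_one]
      abel
    rw [ID, hii (b + 1), hii b]
    simp
  -- zero form of S2
  have Z2 : ∀ b : B,
      op b • (Θ (0, 0, b)).2.1 + op ((Θ (0, 0, b)).2.2) • (op (g b) • m₀) = 0 := by
    intro b; rw [S2 b, neg_add_cancel]
  have Z21 : (Θ (0, 0, (1 : B))).2.1 + op ((Θ (0, 0, (1 : B))).2.2) • m₀ = 0 := by
    simpa using Z2 1
  have hq3one : (Θ (0, 0, (1 : B))).2.1 = -(op ((Θ (0, 0, (1 : B))).2.2) • m₀) :=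
    eq_neg_of_add_eq_zero_left Z21
  have hq3 : ∀ b : B, (Θ (0, 0, b)).2.1 = -(op ((Θ (0, 0, b)).2.2) • m₀) := by
    intro b
    have hcross : op b • (Θ (0, 0, (1 : B))).2.1
        + op ((Θ (0, 0, (1 : B))).2.2) • (op (g b) • m₀) = 0 := by
      rw [hq3one, smul_neg]
      simp only [smul_smul]
      simp only [← op_mul]
      rw [hgb b, neg_add_cancel]
    refine eq_neg_of_add_eq_zero_left ?_
    have ID : (Θ (0, 0, b)).2.1 + op ((Θ (0, 0, b)).2.2) • m₀
        = (op (b + 1) • (Θ (0, 0, b + 1)).2.1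
            + op ((Θ (0, 0, b + 1)).2.2) • (op (g (b + 1)) • m₀))
          - (op b • (Θ (0, 0, b)).2.1 + op ((Θ (0, 0, b)).2.2) • (op (g b) • m₀))
          - ((Θ (0, 0, (1 : B))).2.1 + op ((Θ (0, 0, (1 : B))).2.2) • m₀)
          - (op b • (Θ (0, 0, (1 : B))).2.1
              + op ((Θ (0, 0, (1 : B))).2.2) • (op (g b) • m₀)) := by
      simp only [addB b 1, map_add, map_one, Prod.fst_add, Prod.snd_add, op_add, op_one,
        add_smul, smul_add, one_smul]
      abel
    rw [ID, Z2 (b + 1), Z2 b, Z21, hcross]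
    simp
  -- mixed (a, m) equation
  have E3 : ∀ (a : A) (m : M),
      f a • (Θ (0, m, 0)).2.1 + op ((Θ (0, m, 0)).2.2) • (f a • m₀)
        + op ((Θ (a, 0, 0)).2.2) • ν m = (Θ (a, 0, 0)).1 • m := by
    intro a m
    refine sub_eq_zero.mp ?_
    have ID : f a • (Θ (0, m, 0)).2.1 + op ((Θ (0, m, 0)).2.2) • (f a • m₀)
          + op ((Θ (a, 0, 0)).2.2) • ν m - (Θ (a, 0, 0)).1 • m
        = ((f a • (Θ (a, m, 0)).2.1
              + op ((Θ (a, m, 0)).2.2) • (f a • m₀ - op (g 0) • m₀ + ν m))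
            - ((Θ (a, m, 0)).1 • m + op (0 : B) • (Θ (a, m, 0)).2.1))
          - (f a • (Θ (a, 0, 0)).2.1 + op ((Θ (a, 0, 0)).2.2) • (f a • m₀))
          - (op ((Θ (0, m, 0)).2.2) • ν m - (Θ (0, m, 0)).1 • m) := by
      simp only [hp a m 0, hq a m 0, hr a m 0, h0A, h0M, h0B, map_zero, op_zero, zero_smul,
        smul_zero, sub_zero, add_zero, zero_add, smul_add, add_smul, op_add]
      abel
    rw [ID, K0 a m 0, S1 a, S3 m]
    simp
  -- q on M
  have hq2 : ∀ m : M, (Θ (0, m, 0)).2.1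
      = -(op ((Θ (0, m, 0)).2.2) • m₀) + (Θ ((1 : A), 0, 0)).1 • m
        - op ((Θ ((1 : A), 0, 0)).2.2) • ν m := by
    intro m
    have h := E3 1 m
    simp only [map_one, one_smul] at h
    rw [← h]; abel
  -- (iii)
  have hiii : ∀ (a : A) (m : M),
      (Θ (a, 0, 0)).1 • m - op ((Θ (a, 0, 0)).2.2) • ν m
        = f a • ((Θ ((1 : A), 0, 0)).1 • m - op ((Θ ((1 : A), 0, 0)).2.2) • ν m) := by
    intro a m
    have h := E3 a m
    rw [hq2 m, smul_sub, smul_add, smul_neg,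
      smul_comm (f a) (op ((Θ (0, m, 0)).2.2)) m₀] at h
    rw [smul_sub, ← h]
    abel
  -- mixed (m, b) equation
  have hcrossM : ∀ (m : M) (b : B),
      op b • (Θ (0, m, 0)).2.1 + op ((Θ (0, m, 0)).2.2) • (op (g b) • m₀)
        - op b • ((Θ ((1 : A), 0, 0)).1 • m)
        + op b • (op ((Θ ((1 : A), 0, 0)).2.2) • ν m) = 0 := by
    intro m b
    rw [hq2 m, smul_sub, smul_add, smul_neg]
    simp only [smul_smul]
    simp only [← op_mul]
    rw [hμ₂Z m b]
    abel
  have E4 : ∀ (m : M) (b : B),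
      op ((Θ (0, 0, b)).2.2) • ν m - (Θ (0, 0, b)).1 • m
        = op b • ((Θ ((1 : A), 0, 0)).1 • m)
          - op b • (op ((Θ ((1 : A), 0, 0)).2.2) • ν m) := by
    intro m b
    refine sub_eq_zero.mp ?_
    have ID : op ((Θ (0, 0, b)).2.2) • ν m - (Θ (0, 0, b)).1 • m
          - (op b • ((Θ ((1 : A), 0, 0)).1 • m)
              - op b • (op ((Θ ((1 : A), 0, 0)).2.2) • ν m))
        = ((f 0 • (Θ (0, m, b)).2.1
              + op ((Θ (0, m, b)).2.2) • (f 0 • m₀ - op (g b) • m₀ + ν m))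
            - ((Θ (0, m, b)).1 • m + op b • (Θ (0, m, b)).2.1))
          - (op ((Θ (0, m, 0)).2.2) • ν m - (Θ (0, m, 0)).1 • m)
          + (op b • (Θ (0, 0, b)).2.1 + op ((Θ (0, 0, b)).2.2) • (op (g b) • m₀))
          + (op b • (Θ (0, m, 0)).2.1 + op ((Θ (0, m, 0)).2.2) • (op (g b) • m₀)
              - op b • ((Θ ((1 : A), 0, 0)).1 • m)
              + op b • (op ((Θ ((1 : A), 0, 0)).2.2) • ν m)) := by
      simp only [hp 0 m b, hq 0 m b, hr 0 m b, h0A, h0M, h0B, map_zero, zero_smul,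
        smul_zero, zero_sub, zero_add, add_zero, op_zero, smul_add, smul_sub, smul_neg,
        add_smul, op_add]
      abel
    rw [ID, K0 0 m b, S3 m, Z2 b, hcrossM m b]
    simp
  -- (vi)
  have hvi : ∀ m : M,
      (Θ ((1 : A), 0, 0)).1 • m - op ((Θ ((1 : A), 0, 0)).2.2) • ν m
        = op ((Θ (0, 0, (1 : B))).2.2) • ν m - (Θ (0, 0, (1 : B))).1 • m := by
    intro m
    have h := E4 m 1
    simp only [op_one, one_smul] at h
    exact h.symm
  -- (iv)
  have hiv : ∀ (m : M) (b : B),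
      op ((Θ (0, 0, b)).2.2) • ν m - (Θ (0, 0, b)).1 • m
        = op b • (op ((Θ (0, 0, (1 : B))).2.2) • ν m - (Θ (0, 0, (1 : B))).1 • m) := by
    intro m b
    have h := E4 m b
    rw [← smul_sub, hvi m] at h
    exact h
  -- (vii)
  have hvii : ∀ (a : A) (b : B) (x : A),
      (f a * (Θ (0, 0, b)).1 - (Θ (0, 0, b)).1 * a) * x
        = x * (f a * (Θ (0, 0, b)).1 - (Θ (0, 0, b)).1 * a) := by
    intro a b x
    have hdec : (Θ (a, 0, b)).1 = (Θ (a, 0, 0)).1 + (Θ (0, 0, b)).1 := by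
      rw [hp a 0 b, h0A, add_zero]
    have e : f a * (Θ (a, 0, b)).1 - (Θ (a, 0, b)).1 * a
        = f a * (Θ (0, 0, b)).1 - (Θ (0, 0, b)).1 * a := by
      rw [hdec, mul_add, add_mul, hi a]; abel
    have h := K1 a 0 b x
    rwa [e] at h
  -- (viii)
  have hviii : ∀ (a : A) (b : B) (x : B),
      (g b * (Θ (a, 0, 0)).2.2 - (Θ (a, 0, 0)).2.2 * b) * x
        = x * (g b * (Θ (a, 0, 0)).2.2 - (Θ (a, 0, 0)).2.2 * b) := by
    intro a b x
    have hdec : (Θ (a, 0, b)).2.2 = (Θ (a, 0, 0)).2.2 + (Θ (0, 0, b)).2.2 := by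
      rw [hr a 0 b, h0B, add_zero]
    have e : g b * (Θ (a, 0, b)).2.2 - (Θ (a, 0, b)).2.2 * b
        = g b * (Θ (a, 0, 0)).2.2 - (Θ (a, 0, 0)).2.2 * b := by
      rw [hdec, mul_add, add_mul, hii b]; abel
    have h := K3 a 0 b x
    rwa [e] at h
  -- the explicit form of Θ
  have hform : ∀ (a : A) (m : M) (b : B),
      Θ (a, m, b) = ((Θ (a, 0, 0)).1 + (Θ (0, m, 0)).1 + (Θ (0, 0, b)).1,
        -(op ((Θ (a, 0, 0)).2.2 + (Θ (0, m, 0)).2.2 + (Θ (0, 0, b)).2.2) • m₀)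
          + (Θ ((1 : A), 0, 0)).1 • m - op ((Θ ((1 : A), 0, 0)).2.2) • ν m,
        (Θ (a, 0, 0)).2.2 + (Θ (0, m, 0)).2.2 + (Θ (0, 0, b)).2.2) := by
    intro a m b
    have e2 : (Θ (a, m, b)).2.1
        = -(op ((Θ (a, 0, 0)).2.2 + (Θ (0, m, 0)).2.2 + (Θ (0, 0, b)).2.2) • m₀)
          + (Θ ((1 : A), 0, 0)).1 • m - op ((Θ ((1 : A), 0, 0)).2.2) • ν m := by
      rw [hq a m b, hq1 a, hq2 m, hq3 b]
      simp only [op_add, add_smul]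
      abel
    exact Prod.ext (hp a m b) (Prod.ext e2 (hr a m b))
  -- assemble the linear maps
  refine ⟨(LinearMap.fst R A (M × B)) ∘ₗ Θ ∘ₗ LinearMap.inl R A (M × B),
    (LinearMap.fst R A (M × B)) ∘ₗ Θ
      ∘ₗ (LinearMap.inr R A (M × B)) ∘ₗ LinearMap.inl R M B,
    (LinearMap.fst R A (M × B)) ∘ₗ Θ
      ∘ₗ (LinearMap.inr R A (M × B)) ∘ₗ LinearMap.inr R M B,
    ((LinearMap.snd R M B) ∘ₗ LinearMap.snd R A (M × B)) ∘ₗ Θ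
      ∘ₗ LinearMap.inl R A (M × B),
    ((LinearMap.snd R M B) ∘ₗ LinearMap.snd R A (M × B)) ∘ₗ Θ
      ∘ₗ (LinearMap.inr R A (M × B)) ∘ₗ LinearMap.inl R M B,
    ((LinearMap.snd R M B) ∘ₗ LinearMap.snd R A (M × B)) ∘ₗ Θ
      ∘ₗ (LinearMap.inr R A (M × B)) ∘ₗ LinearMap.inr R M B,
    ?_, ?_, ?_, ?_, ?_, ?_, ?_, ?_, ?_, ?_, ?_⟩ <;>
    simp only [LinearMap.coe_comp, Function.comp_apply, LinearMap.fst_apply,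
      LinearMap.snd_apply, LinearMap.inl_apply, LinearMap.inr_apply, Prod.mk_zero_zero]
  · intro m x
    simpa using hδ₂Z m x
  · intro m x
    simpa using hμ₂Z m x
  · intro a m b
    simpa [Prod.mk_zero_zero] using hform a m b
  · intro a
    simpa [Prod.mk_zero_zero] using hi a
  · intro b
    simpa using hii b
  · intro a m
    simpa [Prod.mk_zero_zero] using hiii a m
  · intro m b
    simpa using hiv m b
  · intro m
    simpa using (S3 m).symm
  · intro m
    exact hvi m
  · intro a b x
    exact hvii a b x
  · intro a b x
    exact hviii a b x
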